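/- arXiv:2206.07677 — 3 statements merged into one kernel-verified Lean document; each statement's English description precedes it below -/
import Mathlib

section
/- For any continuous ℂ^{n×n}-valued potential Q on [−1,1] and matrices Θ± ∈ M_n(ℂ): det N_Θ(λ) = 𝖤_D(λ)/𝖤_Θ(λ) for all λ ∈ ρ(L^Θ), and det M_Θ(λ) = 𝖤_Θ(λ)/𝖤_D(λ) for all λ ∈ ρ(L^D). Consequently, given an auxiliary continuous potential Q̂ and matrices Θ̂±, the function 𝓔(λ) := det N_Θ(λ) · det M̂_{Θ̂}(λ) satisfies 𝓔(λ) = 𝖤_D(λ)·𝖤̂_{Θ̂}(λ) / (𝖤_Θ(λ)·𝖤̂_D(λ)) for all λ ∈ ρ(L^Θ) ∩ ρ(L̂^D). -/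
/-!
Theorem 3.1: for the matrix Schrödinger operator `Lu = -u'' + Qu` on `(-1,1)`
with Robin boundary matrices `Θ± ∈ M_n(ℂ)`, the determinants of the
Robin-to-Dirichlet and Dirichlet-to-Robin matrices are ratios of the Dirichlet
and Robin Evans functions, and consequently
`𝓔(λ) = det N_Θ(λ) · det M̂_{Θ̂}(λ) = 𝖤_D 𝖤̂_{Θ̂} / (𝖤_Θ 𝖤̂_D)`.
The Evans functions are the determinants of the (x-independent) Evans matrices,
written here at `x = 1`.
-/

open Matrix

noncomputable section
namespace Evans

variable {n : ℕ}

/-- `u` (with derivative `u'`) solves `-u'' + Qu = z u` on `ℝ`. -/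
def SolvesODE (Q : ℝ → Matrix (Fin n) (Fin n) ℂ) (z : ℂ)
    (u u' : ℝ → Fin n → ℂ) : Prop :=
  (∀ x : ℝ, HasDerivAt u (u' x) x) ∧
  (∀ x : ℝ, HasDerivAt u' (Q x *ᵥ u x - z • u x) x)

/-- matrix solution of `-Y'' + QY = zY` (each column solves the equation). -/
def SolvesMatODE (Q : ℝ → Matrix (Fin n) (Fin n) ℂ) (z : ℂ)
    (Y Y' : ℝ → Matrix (Fin n) (Fin n) ℂ) : Prop :=
  ∀ j : Fin n, SolvesODE Q z (fun t i => Y t i j) (fun t i => Y' t i j)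

/-- Dirichlet trace `γ_D u = (u(1), u(-1)) ∈ ℂ^{2n}`. -/
def trD (u : ℝ → Fin n → ℂ) : (Fin n ⊕ Fin n) → ℂ := Sum.elim (u 1) (u (-1))

/-- Neumann trace `γ_N u = (u'(1), -u'(-1)) ∈ ℂ^{2n}`. -/
def trN (u' : ℝ → Fin n → ℂ) : (Fin n ⊕ Fin n) → ℂ := Sum.elim (u' 1) (-(u' (-1)))

/-- `z ∈ ρ(𝓛^D)`. -/
def DirichletResolvent (Q : ℝ → Matrix (Fin n) (Fin n) ℂ) : Set ℂ :=
  {z : ℂ | ∀ u u', SolvesODE Q z u u' → trD u = 0 → u = 0}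

/-- `z ∈ ρ(𝓛^Θ)` with `Θ = diag{Θ₊, Θ₋}`. -/
def RobinResolvent (Q : ℝ → Matrix (Fin n) (Fin n) ℂ)
    (Θ : Matrix (Fin n ⊕ Fin n) (Fin n ⊕ Fin n) ℂ) : Set ℂ :=
  {z : ℂ | ∀ u u', SolvesODE Q z u u' → trN u' + Θ *ᵥ trD u = 0 → u = 0}

/-- `M` is the Dirichlet-to-Robin matrix `M_Θ(z)`. -/
def IsDtRmat (Q : ℝ → Matrix (Fin n) (Fin n) ℂ)
    (Θ : Matrix (Fin n ⊕ Fin n) (Fin n ⊕ Fin n) ℂ) (z : ℂ)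
    (M : Matrix (Fin n ⊕ Fin n) (Fin n ⊕ Fin n) ℂ) : Prop :=
  ∀ f : (Fin n ⊕ Fin n) → ℂ, ∃ u u',
    SolvesODE Q z u u' ∧ trD u = f ∧ M *ᵥ f = trN u' + Θ *ᵥ trD u

/-- `N` is the Robin-to-Dirichlet matrix `N_Θ(z)`. -/
def IsRtDmat (Q : ℝ → Matrix (Fin n) (Fin n) ℂ)
    (Θ : Matrix (Fin n ⊕ Fin n) (Fin n ⊕ Fin n) ℂ) (z : ℂ)
    (N : Matrix (Fin n ⊕ Fin n) (Fin n ⊕ Fin n) ℂ) : Prop :=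
  ∀ g : (Fin n ⊕ Fin n) → ℂ, ∃ u u',
    SolvesODE Q z u u' ∧ trN u' + Θ *ᵥ trD u = g ∧ N *ᵥ g = trD u

/-- the Dirichlet Evans function `𝖤_D(λ)`, i.e. the determinant of the Evans
matrix `[Y₋ Y₊; Y₋' Y₊']` (evaluated at `x = 1`). -/
def EvansD (Ym Yp Ym' Yp' : ℝ → Matrix (Fin n) (Fin n) ℂ) : ℂ :=
  (Matrix.fromBlocks (Ym 1) (Yp 1) (Ym' 1) (Yp' 1)).det

/-- the Robin Evans function `𝖤_Θ(λ)` for `W± = V± + Y± Θ±` (at `x = 1`). -/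
def EvansR (Ym Yp Ym' Yp' Vm Vp Vm' Vp' : ℝ → Matrix (Fin n) (Fin n) ℂ)
    (Θp Θm : Matrix (Fin n) (Fin n) ℂ) : ℂ :=
  (Matrix.fromBlocks
    (Vm 1 + Ym 1 * Θm) (Vp 1 + Yp 1 * Θp)
    (Vm' 1 + Ym' 1 * Θm) (Vp' 1 + Yp' 1 * Θp)).det


variable {Q : ℝ → Matrix (Fin n) (Fin n) ℂ} {z : ℂ}

lemma SolvesODE.sub {u u' v v' : ℝ → Fin n → ℂ} (hu : SolvesODE Q z u u')
    (hv : SolvesODE Q z v v') :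
    SolvesODE Q z (fun t => u t - v t) (fun t => u' t - v' t) := by
  refine ⟨fun x => (hu.1 x).sub (hv.1 x), fun x => ?_⟩
  have h := (hu.2 x).sub (hv.2 x)
  have : (Q x *ᵥ u x - z • u x) - (Q x *ᵥ v x - z • v x)
      = Q x *ᵥ (u x - v x) - z • (u x - v x) := by
    rw [Matrix.mulVec_sub, smul_sub]; abel
  rwa [this] at h

lemma solvesODE_mulVec {Y Y' : ℝ → Matrix (Fin n) (Fin n) ℂ}
    (hY : SolvesMatODE Q z Y Y') (a : Fin n → ℂ) :
    SolvesODE Q z (fun t => Y t *ᵥ a) (fun t => Y' t *ᵥ a) := by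
  have key : ∀ (W : ℝ → Matrix (Fin n) (Fin n) ℂ) (t : ℝ),
      W t *ᵥ a = ∑ j, a j • (fun i => W t i j) := by
    intro W t; funext i
    simp [Matrix.mulVec, dotProduct, Finset.sum_apply, mul_comm]
  constructor
  · intro x
    have h : HasDerivAt (fun t => ∑ j, a j • (fun i => Y t i j))
        (∑ j, a j • (fun i => Y' x i j)) x :=
      HasDerivAt.fun_sum fun j _ => ((hY j).1 x).const_smul (a j)
    simp only [← key] at h
    exact h
  · intro x
    have h : HasDerivAt (fun t => ∑ j, a j • (fun i => Y' t i j))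
        (∑ j, a j • ((Q x *ᵥ fun i => Y x i j) - z • fun i => Y x i j)) x :=
      HasDerivAt.fun_sum fun j _ => ((hY j).2 x).const_smul (a j)
    simp only [← key] at h
    convert h using 1
    funext i
    simp only [Finset.sum_apply, Pi.smul_apply, Pi.sub_apply, smul_eq_mul,
      Matrix.mulVec, dotProduct, Finset.mul_sum, Finset.sum_sub_distrib,
      mul_sub]
    congr 1
    · rw [Finset.sum_comm]
      exact Finset.sum_congr rfl fun j _ => Finset.sum_congr rfl fun k _ => by ring
    · exact Finset.sum_congr rfl fun j _ => by ring

lemma solvesODE_combo {Vm Vm' Ym Ym' : ℝ → Matrix (Fin n) (Fin n) ℂ}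
    (hVm : SolvesMatODE Q z Vm Vm') (hYm : SolvesMatODE Q z Ym Ym')
    (a b : Fin n → ℂ) :
    SolvesODE Q z (fun t => Vm t *ᵥ a + Ym t *ᵥ b)
      (fun t => Vm' t *ᵥ a + Ym' t *ᵥ b) := by
  have h1 := solvesODE_mulVec hVm a
  have h2 := solvesODE_mulVec hYm b
  refine ⟨fun x => (h1.1 x).add (h2.1 x), fun x => ?_⟩
  have h := (h1.2 x).add (h2.2 x)
  have e : (Q x *ᵥ (Vm x *ᵥ a) - z • (Vm x *ᵥ a)) +
      (Q x *ᵥ (Ym x *ᵥ b) - z • (Ym x *ᵥ b))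
      = Q x *ᵥ (Vm x *ᵥ a + Ym x *ᵥ b) - z • (Vm x *ᵥ a + Ym x *ᵥ b) := by
    rw [Matrix.mulVec_add, smul_add]; abel
  rwa [e] at h

lemma trD_sub (u v : ℝ → Fin n → ℂ) :
    trD (fun t => u t - v t) = trD u - trD v := by
  funext x; cases x <;> simp [trD]

lemma trN_sub (u v : ℝ → Fin n → ℂ) :
    trN (fun t => u t - v t) = trN u - trN v := by
  funext x; cases x <;> simp [trN] <;> ring

lemma U_spec {Vm Vm' Ym Ym' : ℝ → Matrix (Fin n) (Fin n) ℂ}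
    (hVm : SolvesMatODE Q z Vm Vm') (hYm : SolvesMatODE Q z Ym Ym')
    (hVm₀ : Vm (-1) = 1) (hVm₁ : Vm' (-1) = 0)
    (hYm₀ : Ym (-1) = 0) (hYm₁ : Ym' (-1) = 1)
    (Θp Θm : Matrix (Fin n) (Fin n) ℂ) (c : (Fin n ⊕ Fin n) → ℂ) :
    ∃ U U' : ℝ → Fin n → ℂ, SolvesODE Q z U U' ∧
      trD U = Matrix.fromBlocks (Vm 1) (Ym 1) 1 0 *ᵥ c ∧
      trN U' + Matrix.fromBlocks Θp 0 0 Θm *ᵥ trD U =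
        Matrix.fromBlocks (Vm' 1 + Θp * Vm 1) (Ym' 1 + Θp * Ym 1) Θm (-1) *ᵥ c ∧
      (U = 0 → c = 0) := by
  set a : Fin n → ℂ := c ∘ Sum.inl with ha
  set b : Fin n → ℂ := c ∘ Sum.inr with hb
  set U : ℝ → Fin n → ℂ := fun t => Vm t *ᵥ a + Ym t *ᵥ b with hU
  set U' : ℝ → Fin n → ℂ := fun t => Vm' t *ᵥ a + Ym' t *ᵥ b with hU'
  have hsol : SolvesODE Q z U U' := solvesODE_combo hVm hYm a b
  have hD : trD U = Matrix.fromBlocks (Vm 1) (Ym 1) 1 0 *ᵥ c := by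
    funext x
    rw [Matrix.fromBlocks_mulVec]
    cases x <;>
      simp [trD, hU, hVm₀, hYm₀, Matrix.one_mulVec, Matrix.zero_mulVec, ha, hb]
  refine ⟨U, U', hsol, hD, ?_, ?_⟩
  · rw [hD]
    funext x
    cases x <;>
      simp [trN, hU', hVm₁, hYm₁, Matrix.fromBlocks_mulVec, Matrix.add_mulVec,
        ← Matrix.mulVec_mulVec, Matrix.one_mulVec, Matrix.zero_mulVec,
        Matrix.neg_mulVec, Matrix.mulVec_add, ha, hb] <;>
      ring
  · intro hU0
    have haz : a = 0 := by
      have h := congrFun hU0 (-1)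
      simpa [hU, hVm₀, hYm₀, Matrix.one_mulVec, Matrix.zero_mulVec] using h
    have hbz : b = 0 := by
      have hd : HasDerivAt U (U' (-1)) (-1) := hsol.1 (-1)
      rw [hU0] at hd
      have h0 : HasDerivAt (0 : ℝ → Fin n → ℂ) 0 (-1) := hasDerivAt_const _ _
      have := h0.unique hd
      simpa [hU', hVm₁, hYm₁, Matrix.one_mulVec, Matrix.zero_mulVec] using this.symm
    funext x
    cases x with
    | inl i => exact congrFun haz i
    | inr i => exact congrFun hbz i

lemma NmulR {Vm Vm' Ym Ym' : ℝ → Matrix (Fin n) (Fin n) ℂ}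
    (hVm : SolvesMatODE Q z Vm Vm') (hYm : SolvesMatODE Q z Ym Ym')
    (hVm₀ : Vm (-1) = 1) (hVm₁ : Vm' (-1) = 0)
    (hYm₀ : Ym (-1) = 0) (hYm₁ : Ym' (-1) = 1)
    (Θp Θm : Matrix (Fin n) (Fin n) ℂ)
    (hz : z ∈ RobinResolvent Q (Matrix.fromBlocks Θp 0 0 Θm))
    (N : Matrix (Fin n ⊕ Fin n) (Fin n ⊕ Fin n) ℂ)
    (hN : IsRtDmat Q (Matrix.fromBlocks Θp 0 0 Θm) z N) :
    N * Matrix.fromBlocks (Vm' 1 + Θp * Vm 1) (Ym' 1 + Θp * Ym 1) Θm (-1)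
        = Matrix.fromBlocks (Vm 1) (Ym 1) 1 0 ∧
      IsUnit (Matrix.fromBlocks (Vm' 1 + Θp * Vm 1) (Ym' 1 + Θp * Ym 1) Θm (-1)) := by
  set R := Matrix.fromBlocks (Vm' 1 + Θp * Vm 1) (Ym' 1 + Θp * Ym 1) Θm
    (-1 : Matrix (Fin n) (Fin n) ℂ) with hR
  set D := Matrix.fromBlocks (Vm 1) (Ym 1) (1 : Matrix (Fin n) (Fin n) ℂ) 0 with hDdef
  have hker : ∀ c, R *ᵥ c = 0 → c = 0 := by
    intro c hc
    obtain ⟨U, U', hU, hUD, hUR, hU0⟩ := U_spec hVm hYm hVm₀ hVm₁ hYm₀ hYm₁ Θp Θm c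
    exact hU0 (hz U U' hU (by rw [hUR, ← hR, hc]))
  have hRunit : IsUnit R := by
    rw [← Matrix.mulVec_injective_iff_isUnit]
    intro c d h
    have := hker (c - d) (by rw [Matrix.mulVec_sub, h, sub_self])
    exact sub_eq_zero.mp this
  refine ⟨?_, hRunit⟩
  have key : ∀ c, N *ᵥ (R *ᵥ c) = D *ᵥ c := by
    intro c
    obtain ⟨U, U', hU, hUD, hUR, -⟩ := U_spec hVm hYm hVm₀ hVm₁ hYm₀ hYm₁ Θp Θm c
    obtain ⟨u, u', hu, hug, hNg⟩ := hN (R *ᵥ c)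
    have hdiff : (fun t => u t - U t) = 0 := by
      refine hz _ _ (hu.sub hU) ?_
      rw [trN_sub, trD_sub, Matrix.mulVec_sub]
      have : trN u' - trN U' + (Matrix.fromBlocks Θp 0 0 Θm *ᵥ trD u -
          Matrix.fromBlocks Θp 0 0 Θm *ᵥ trD U)
          = (trN u' + Matrix.fromBlocks Θp 0 0 Θm *ᵥ trD u) -
            (trN U' + Matrix.fromBlocks Θp 0 0 Θm *ᵥ trD U) := by abel
      rw [this, hug, hUR, ← hR, sub_self]
    have huU : u = U := by
      funext t; exact sub_eq_zero.mp (congrFun hdiff t)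
    rw [hNg, huU, hUD, hDdef]
  ext i j
  have h2 := key (Pi.single j 1)
  rw [Matrix.mulVec_mulVec] at h2
  have := congrFun h2 i
  simpa using this

lemma MmulD {Vm Vm' Ym Ym' : ℝ → Matrix (Fin n) (Fin n) ℂ}
    (hVm : SolvesMatODE Q z Vm Vm') (hYm : SolvesMatODE Q z Ym Ym')
    (hVm₀ : Vm (-1) = 1) (hVm₁ : Vm' (-1) = 0)
    (hYm₀ : Ym (-1) = 0) (hYm₁ : Ym' (-1) = 1)
    (Θp Θm : Matrix (Fin n) (Fin n) ℂ)
    (hz : z ∈ DirichletResolvent Q)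
    (M : Matrix (Fin n ⊕ Fin n) (Fin n ⊕ Fin n) ℂ)
    (hM : IsDtRmat Q (Matrix.fromBlocks Θp 0 0 Θm) z M) :
    M * Matrix.fromBlocks (Vm 1) (Ym 1) 1 0
        = Matrix.fromBlocks (Vm' 1 + Θp * Vm 1) (Ym' 1 + Θp * Ym 1) Θm (-1) ∧
      IsUnit (Matrix.fromBlocks (Vm 1) (Ym 1) (1 : Matrix (Fin n) (Fin n) ℂ) 0) := by
  set R := Matrix.fromBlocks (Vm' 1 + Θp * Vm 1) (Ym' 1 + Θp * Ym 1) Θm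
    (-1 : Matrix (Fin n) (Fin n) ℂ) with hR
  set D := Matrix.fromBlocks (Vm 1) (Ym 1) (1 : Matrix (Fin n) (Fin n) ℂ) 0 with hDdef
  have hker : ∀ c, D *ᵥ c = 0 → c = 0 := by
    intro c hc
    obtain ⟨U, U', hU, hUD, hUR, hU0⟩ := U_spec hVm hYm hVm₀ hVm₁ hYm₀ hYm₁ Θp Θm c
    exact hU0 (hz U U' hU (by rw [hUD, ← hDdef, hc]))
  have hDunit : IsUnit D := by
    rw [← Matrix.mulVec_injective_iff_isUnit]
    intro c d h
    have := hker (c - d) (by rw [Matrix.mulVec_sub, h, sub_self])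
    exact sub_eq_zero.mp this
  refine ⟨?_, hDunit⟩
  have key : ∀ c, M *ᵥ (D *ᵥ c) = R *ᵥ c := by
    intro c
    obtain ⟨U, U', hU, hUD, hUR, -⟩ := U_spec hVm hYm hVm₀ hVm₁ hYm₀ hYm₁ Θp Θm c
    obtain ⟨u, u', hu, hug, hMf⟩ := hM (D *ᵥ c)
    have hdiff : (fun t => u t - U t) = 0 := by
      refine hz _ _ (hu.sub hU) ?_
      rw [trD_sub, hug, hUD, ← hDdef, sub_self]
    have huU : u = U := by
      funext t; exact sub_eq_zero.mp (congrFun hdiff t)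
    have huU' : u' = U' := by
      funext t
      have h1 : HasDerivAt u (u' t) t := hu.1 t
      rw [huU] at h1
      exact h1.unique (hU.1 t)
    rw [hMf, huU, huU', hUR, hR]
  ext i j
  have h2 := key (Pi.single j 1)
  rw [Matrix.mulVec_mulVec] at h2
  have := congrFun h2 i
  simpa using this

lemma det_blocks (V Y V' Y' Θp Θm : Matrix (Fin n) (Fin n) ℂ) :
    ∃ σ s : ℂ, σ * σ = 1 ∧
      (Matrix.fromBlocks V Y (1 : Matrix (Fin n) (Fin n) ℂ) 0).det = σ * Y.det ∧
      (Matrix.fromBlocks (V' + Θp * V) (Y' + Θp * Y) Θm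
        (-1 : Matrix (Fin n) (Fin n) ℂ)).det = (-1) ^ n * s ∧
      (Matrix.fromBlocks (V + Y * Θm) (-1 : Matrix (Fin n) (Fin n) ℂ)
        (V' + Y' * Θm) Θp).det = σ * ((-1) ^ n * s) := by
  set J := Matrix.fromBlocks (0 : Matrix (Fin n) (Fin n) ℂ) (1 : Matrix (Fin n) (Fin n) ℂ)
    (1 : Matrix (Fin n) (Fin n) ℂ) (0 : Matrix (Fin n) (Fin n) ℂ) with hJ
  set S := V' + Θp * V + (Y' + Θp * Y) * Θm with hS
  have hJJ : J * J = 1 := by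
    rw [hJ, Matrix.fromBlocks_multiply]
    simp [Matrix.fromBlocks_one]
  have hσ : J.det * J.det = 1 := by rw [← Matrix.det_mul, hJJ, Matrix.det_one]
  have hswap : ∀ B C : Matrix (Fin n) (Fin n) ℂ,
      (Matrix.fromBlocks 0 B C 0).det = B.det * C.det * J.det := by
    intro B C
    have e : Matrix.fromBlocks (0 : Matrix (Fin n) (Fin n) ℂ) B C 0 =
        Matrix.fromBlocks B 0 0 C * J := by
      rw [hJ, Matrix.fromBlocks_multiply]; simp
    rw [e, Matrix.det_mul, Matrix.det_fromBlocks_zero₁₂]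
  have hdn : (-1 : Matrix (Fin n) (Fin n) ℂ).det = (-1) ^ n := by
    simp [Matrix.det_neg]
  refine ⟨J.det, S.det, hσ, ?_, ?_, ?_⟩
  · have e : Matrix.fromBlocks V Y (1 : Matrix (Fin n) (Fin n) ℂ) 0 =
        Matrix.fromBlocks 1 V 0 1 * Matrix.fromBlocks 0 Y 1 0 := by
      rw [Matrix.fromBlocks_multiply]; simp
    rw [e, Matrix.det_mul, Matrix.det_fromBlocks_zero₂₁, hswap]
    simp only [Matrix.det_one]
    ring
  · have e : Matrix.fromBlocks (V' + Θp * V) (Y' + Θp * Y) Θm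
        (-1 : Matrix (Fin n) (Fin n) ℂ) =
        Matrix.fromBlocks 1 (-(Y' + Θp * Y)) 0 1 *
          Matrix.fromBlocks S 0 Θm (-1) := by
      rw [Matrix.fromBlocks_multiply, Matrix.fromBlocks_inj]
      refine ⟨by rw [hS]; noncomm_ring, by noncomm_ring, by simp, by simp⟩
    rw [e, Matrix.det_mul, Matrix.det_fromBlocks_zero₂₁, Matrix.det_fromBlocks_zero₁₂,
      hdn]
    simp only [Matrix.det_one]
    ring
  · have e2 : Matrix.fromBlocks (V + Y * Θm) (-1 : Matrix (Fin n) (Fin n) ℂ)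
        (V' + Y' * Θm) Θp =
        Matrix.fromBlocks (1 : Matrix (Fin n) (Fin n) ℂ) (0 : Matrix (Fin n) (Fin n) ℂ)
            (-Θp) (1 : Matrix (Fin n) (Fin n) ℂ) *
          (Matrix.fromBlocks (0 : Matrix (Fin n) (Fin n) ℂ) (-1) S
              (0 : Matrix (Fin n) (Fin n) ℂ) *
            Matrix.fromBlocks (1 : Matrix (Fin n) (Fin n) ℂ) (0 : Matrix (Fin n) (Fin n) ℂ)
              (-(V + Y * Θm)) (1 : Matrix (Fin n) (Fin n) ℂ)) := by
      have einner : Matrix.fromBlocks (0 : Matrix (Fin n) (Fin n) ℂ) (-1) S 0 *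
          Matrix.fromBlocks (1 : Matrix (Fin n) (Fin n) ℂ) (0 : Matrix (Fin n) (Fin n) ℂ)
            (-(V + Y * Θm)) (1 : Matrix (Fin n) (Fin n) ℂ) =
          Matrix.fromBlocks (V + Y * Θm) (-1) S 0 := by
        rw [Matrix.fromBlocks_multiply, Matrix.fromBlocks_inj]
        refine ⟨by noncomm_ring, by simp, by simp, by simp⟩
      rw [einner, Matrix.fromBlocks_multiply, Matrix.fromBlocks_inj]
      refine ⟨by noncomm_ring, by noncomm_ring, by rw [hS]; noncomm_ring, by noncomm_ring⟩
    rw [e2, Matrix.det_mul, Matrix.det_mul, Matrix.det_fromBlocks_zero₁₂,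
      Matrix.det_fromBlocks_zero₁₂, hswap, hdn]
    simp only [Matrix.det_one]
    ring

lemma detN_final {Vm Vm' Ym Ym' : ℝ → Matrix (Fin n) (Fin n) ℂ}
    (hVm : SolvesMatODE Q z Vm Vm') (hYm : SolvesMatODE Q z Ym Ym')
    (hVm₀ : Vm (-1) = 1) (hVm₁ : Vm' (-1) = 0)
    (hYm₀ : Ym (-1) = 0) (hYm₁ : Ym' (-1) = 1)
    (Yp Yp' Vp Vp' : ℝ → Matrix (Fin n) (Fin n) ℂ)
    (hYp₀ : Yp 1 = 0) (hYp₁ : Yp' 1 = 1) (hVp₀ : Vp 1 = -1) (hVp₁ : Vp' 1 = 0)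
    (Θp Θm : Matrix (Fin n) (Fin n) ℂ)
    (hz : z ∈ RobinResolvent Q (Matrix.fromBlocks Θp 0 0 Θm))
    (N : Matrix (Fin n ⊕ Fin n) (Fin n ⊕ Fin n) ℂ)
    (hN : IsRtDmat Q (Matrix.fromBlocks Θp 0 0 Θm) z N) :
    N.det = EvansD Ym Yp Ym' Yp' / EvansR Ym Yp Ym' Yp' Vm Vp Vm' Vp' Θp Θm := by
  obtain ⟨hNR, hRunit⟩ := NmulR hVm hYm hVm₀ hVm₁ hYm₀ hYm₁ Θp Θm hz N hN
  obtain ⟨σ, s, hσ, hD, hRdet, hEdet⟩ := det_blocks (Vm 1) (Ym 1) (Vm' 1) (Ym' 1) Θp Θm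
  have hED : EvansD Ym Yp Ym' Yp' = (Ym 1).det := by
    rw [EvansD, hYp₀, hYp₁, Matrix.det_fromBlocks_zero₁₂, Matrix.det_one, mul_one]
  have hER : EvansR Ym Yp Ym' Yp' Vm Vp Vm' Vp' Θp Θm = σ * ((-1) ^ n * s) := by
    rw [EvansR, hYp₀, hYp₁, hVp₀, hVp₁]
    simpa using hEdet
  have hdetmul : N.det * ((-1 : ℂ) ^ n * s) = σ * (Ym 1).det := by
    rw [← hRdet, ← Matrix.det_mul, hNR, hD]
  have hRne : ((-1 : ℂ)) ^ n * s ≠ 0 := by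
    rw [← hRdet]
    exact ((Matrix.isUnit_iff_isUnit_det _).mp hRunit).ne_zero
  have hσne : σ ≠ 0 := left_ne_zero_of_mul_eq_one hσ
  rw [hED, hER, eq_div_iff (mul_ne_zero hσne hRne)]
  linear_combination σ * hdetmul + (Ym 1).det * hσ

lemma detM_final {Vm Vm' Ym Ym' : ℝ → Matrix (Fin n) (Fin n) ℂ}
    (hVm : SolvesMatODE Q z Vm Vm') (hYm : SolvesMatODE Q z Ym Ym')
    (hVm₀ : Vm (-1) = 1) (hVm₁ : Vm' (-1) = 0)
    (hYm₀ : Ym (-1) = 0) (hYm₁ : Ym' (-1) = 1)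
    (Yp Yp' Vp Vp' : ℝ → Matrix (Fin n) (Fin n) ℂ)
    (hYp₀ : Yp 1 = 0) (hYp₁ : Yp' 1 = 1) (hVp₀ : Vp 1 = -1) (hVp₁ : Vp' 1 = 0)
    (Θp Θm : Matrix (Fin n) (Fin n) ℂ)
    (hz : z ∈ DirichletResolvent Q)
    (M : Matrix (Fin n ⊕ Fin n) (Fin n ⊕ Fin n) ℂ)
    (hM : IsDtRmat Q (Matrix.fromBlocks Θp 0 0 Θm) z M) :
    M.det = EvansR Ym Yp Ym' Yp' Vm Vp Vm' Vp' Θp Θm / EvansD Ym Yp Ym' Yp' := by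
  obtain ⟨hMD, hDunit⟩ := MmulD hVm hYm hVm₀ hVm₁ hYm₀ hYm₁ Θp Θm hz M hM
  obtain ⟨σ, s, hσ, hD, hRdet, hEdet⟩ := det_blocks (Vm 1) (Ym 1) (Vm' 1) (Ym' 1) Θp Θm
  have hED : EvansD Ym Yp Ym' Yp' = (Ym 1).det := by
    rw [EvansD, hYp₀, hYp₁, Matrix.det_fromBlocks_zero₁₂, Matrix.det_one, mul_one]
  have hER : EvansR Ym Yp Ym' Yp' Vm Vp Vm' Vp' Θp Θm = σ * ((-1) ^ n * s) := by
    rw [EvansR, hYp₀, hYp₁, hVp₀, hVp₁]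
    simpa using hEdet
  have hdetmul : M.det * (σ * (Ym 1).det) = (-1 : ℂ) ^ n * s := by
    rw [← hD, ← Matrix.det_mul, hMD, hRdet]
  have hDne : σ * (Ym 1).det ≠ 0 := by
    rw [← hD]
    exact ((Matrix.isUnit_iff_isUnit_det _).mp hDunit).ne_zero
  have hYne : (Ym 1).det ≠ 0 := right_ne_zero_of_mul hDne
  rw [hED, hER, eq_div_iff hYne]
  linear_combination σ * hdetmul - M.det * (Ym 1).det * hσ

/-- **Theorem 3.1.** -/
theorem thm_fdEvans
    (Q Qhat : ℝ → Matrix (Fin n) (Fin n) ℂ)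
    (hQ : Continuous Q) (hQhat : Continuous Qhat)
    (Θp Θm Θhatp Θhatm : Matrix (Fin n) (Fin n) ℂ)
    -- the fundamental matrix solutions for Q with their boundary conditions
    (Ym Ym' Yp Yp' Vm Vm' Vp Vp' : ℝ → Matrix (Fin n) (Fin n) ℂ) (z : ℂ)
    (hYm : SolvesMatODE Q z Ym Ym') (hYp : SolvesMatODE Q z Yp Yp')
    (hVm : SolvesMatODE Q z Vm Vm') (hVp : SolvesMatODE Q z Vp Vp')
    (hYm₀ : Ym (-1) = 0) (hYm₁ : Ym' (-1) = 1)
    (hYp₀ : Yp 1 = 0) (hYp₁ : Yp' 1 = 1)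
    (hVm₀ : Vm (-1) = 1) (hVm₁ : Vm' (-1) = 0)
    (hVp₀ : Vp 1 = -1) (hVp₁ : Vp' 1 = 0)
    -- the fundamental matrix solutions for Q̂
    (Zm Zm' Zp Zp' Wm Wm' Wp Wp' : ℝ → Matrix (Fin n) (Fin n) ℂ)
    (hZm : SolvesMatODE Qhat z Zm Zm') (hZp : SolvesMatODE Qhat z Zp Zp')
    (hWm : SolvesMatODE Qhat z Wm Wm') (hWp : SolvesMatODE Qhat z Wp Wp')
    (hZm₀ : Zm (-1) = 0) (hZm₁ : Zm' (-1) = 1)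
    (hZp₀ : Zp 1 = 0) (hZp₁ : Zp' 1 = 1)
    (hWm₀ : Wm (-1) = 1) (hWm₁ : Wm' (-1) = 0)
    (hWp₀ : Wp 1 = -1) (hWp₁ : Wp' 1 = 0) :
    -- det N_Θ(λ) = 𝖤_D(λ)/𝖤_Θ(λ) on ρ(𝓛^Θ)
    (z ∈ RobinResolvent Q (Matrix.fromBlocks Θp 0 0 Θm) →
      ∀ N, IsRtDmat Q (Matrix.fromBlocks Θp 0 0 Θm) z N →
        N.det = EvansD Ym Yp Ym' Yp' /
          EvansR Ym Yp Ym' Yp' Vm Vp Vm' Vp' Θp Θm) ∧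
    -- det M_Θ(λ) = 𝖤_Θ(λ)/𝖤_D(λ) on ρ(𝓛^D)
    (z ∈ DirichletResolvent Q →
      ∀ M, IsDtRmat Q (Matrix.fromBlocks Θp 0 0 Θm) z M →
        M.det = EvansR Ym Yp Ym' Yp' Vm Vp Vm' Vp' Θp Θm /
          EvansD Ym Yp Ym' Yp') ∧
    -- 𝓔(λ) = det N_Θ(λ) det M̂_{Θ̂}(λ) = 𝖤_D 𝖤̂_{Θ̂} / (𝖤_Θ 𝖤̂_D)
    (z ∈ RobinResolvent Q (Matrix.fromBlocks Θp 0 0 Θm) →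
      z ∈ DirichletResolvent Qhat →
      ∀ N, IsRtDmat Q (Matrix.fromBlocks Θp 0 0 Θm) z N →
      ∀ Mhat, IsDtRmat Qhat (Matrix.fromBlocks Θhatp 0 0 Θhatm) z Mhat →
        N.det * Mhat.det =
          (EvansD Ym Yp Ym' Yp' * EvansR Zm Zp Zm' Zp' Wm Wp Wm' Wp' Θhatp Θhatm) /
          (EvansR Ym Yp Ym' Yp' Vm Vp Vm' Vp' Θp Θm * EvansD Zm Zp Zm' Zp')) := by
  refine ⟨fun hz N hN => detN_final hVm hYm hVm₀ hVm₁ hYm₀ hYm₁ Yp Yp' Vp Vp'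
      hYp₀ hYp₁ hVp₀ hVp₁ Θp Θm hz N hN,
    fun hz M hM => detM_final hVm hYm hVm₀ hVm₁ hYm₀ hYm₁ Yp Yp' Vp Vp'
      hYp₀ hYp₁ hVp₀ hVp₁ Θp Θm hz M hM,
    fun h1 h2 N hN Mhat hMhat => ?_⟩
  rw [detN_final hVm hYm hVm₀ hVm₁ hYm₀ hYm₁ Yp Yp' Vp Vp'
      hYp₀ hYp₁ hVp₀ hVp₁ Θp Θm h1 N hN,
    detM_final hWm hZm hWm₀ hWm₁ hZm₀ hZm₁ Zp Zp' Wp Wp'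
      hZp₀ hZp₁ hWp₀ hWp₁ Θhatp Θhatm h2 Mhat hMhat]
  exact div_mul_div_comm _ _ _ _

end Evans
end
end

section
/- For a continuous ℂ^{n×n}-valued potential Q on [−1,1], λ ∈ ρ(L^D) if and only if the 2n×2n matrix X = [γ_D Y_−, γ_D V_−] is invertible, in which case the Dirichlet-to-Neumann map is given by M(λ) = Z X^{−1}, where Z = [γ_N Y_−, γ_N V_−]. -/
/-!
Lemma 3.2: for the matrix Schrödinger operator `Lu = -u'' + Qu` on `(-1,1)`,
`λ ∈ ρ(𝓛^D)` iff the frame block `X` is invertible, in which case the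
Dirichlet-to-Neumann matrix is `M(λ) = Z X⁻¹`.
-/

open Matrix

noncomputable section
namespace Evans

variable {n : ℕ}

/-- `M` is the Dirichlet-to-Neumann matrix of `-d²/dx² + Q` at `z`. -/
def IsDtN (Q : ℝ → Matrix (Fin n) (Fin n) ℂ) (z : ℂ)
    (M : Matrix (Fin n ⊕ Fin n) (Fin n ⊕ Fin n) ℂ) : Prop :=
  ∀ f : (Fin n ⊕ Fin n) → ℂ, ∃ u u',
    SolvesODE Q z u u' ∧ trD u = f ∧ M *ᵥ f = trN u'

section Aux
open Set
variable {Q : ℝ → Matrix (Fin n) (Fin n) ℂ} {z : ℂ}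

lemma solves_sub {u u' w w' : ℝ → Fin n → ℂ} (h₁ : SolvesODE Q z u u')
    (h₂ : SolvesODE Q z w w') : SolvesODE Q z (u - w) (u' - w') := by
  refine ⟨fun x => ?_, fun x => ?_⟩
  · exact (h₁.1 x).sub (h₂.1 x)
  · have := (h₁.2 x).sub (h₂.2 x)
    refine this.congr_deriv (Eq.symm ?_)
    simp only [Pi.sub_apply, Matrix.mulVec_sub, smul_sub]
    abel

lemma mulVec_eq_sum_cols (M : Matrix (Fin n) (Fin n) ℂ) (c : Fin n → ℂ) :
    M *ᵥ c = ∑ j, c j • (fun i => M i j) := by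
  funext i
  simp [Matrix.mulVec, dotProduct, Finset.sum_apply, mul_comm]

lemma hasDerivAt_smul_sum {c : Fin n → ℂ} {A : Fin n → ℝ → (Fin n → ℂ)}
    {A' : Fin n → (Fin n → ℂ)} {x : ℝ} (h : ∀ j, HasDerivAt (A j) (A' j) x) :
    HasDerivAt (fun t => ∑ j : Fin n, c j • (A j t))
      (∑ j : Fin n, c j • (A' j)) x :=
  HasDerivAt.fun_sum fun j _ => (h j).const_smul (c j)

lemma solves_mulVec {Y Y' : ℝ → Matrix (Fin n) (Fin n) ℂ}
    (hY : SolvesMatODE Q z Y Y') (c : Fin n → ℂ) :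
    SolvesODE Q z (fun t => Y t *ᵥ c) (fun t => Y' t *ᵥ c) := by
  simp only [mulVec_eq_sum_cols]
  refine ⟨fun x => ?_, fun x => ?_⟩
  · exact hasDerivAt_smul_sum fun j => (hY j).1 x
  · have : HasDerivAt (fun t => ∑ j : Fin n, c j • (fun i => Y' t i j))
        (∑ j : Fin n, c j • (Q x *ᵥ (fun i => Y x i j) - z • fun i => Y x i j)) x :=
      hasDerivAt_smul_sum fun j => (hY j).2 x
    refine this.congr_deriv (Eq.symm ?_)
    rw [← Matrix.mulVecLin_apply, map_sum, Finset.smul_sum, ← Finset.sum_sub_distrib]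
    refine Finset.sum_congr rfl fun j _ => ?_
    rw [_root_.map_smul, Matrix.mulVecLin_apply, smul_sub, smul_comm z (c j)]

lemma solves_add {u u' w w' : ℝ → Fin n → ℂ} (h₁ : SolvesODE Q z u u')
    (h₂ : SolvesODE Q z w w') :
    SolvesODE Q z (fun t => u t + w t) (fun t => u' t + w' t) := by
  refine ⟨fun x => (h₁.1 x).add (h₂.1 x), fun x => ?_⟩
  have := (h₁.2 x).add (h₂.2 x)
  refine this.congr_deriv (Eq.symm ?_)
  simp only [Matrix.mulVec_add, smul_add]
  abel

lemma mulVec_norm_le (M : Matrix (Fin n) (Fin n) ℂ) (x : Fin n → ℂ) :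
    ‖M *ᵥ x‖ ≤ (∑ i, ∑ j, ‖M i j‖) * ‖x‖ := by
  have hC : 0 ≤ (∑ i, ∑ j, ‖M i j‖) :=
    Finset.sum_nonneg fun i _ => Finset.sum_nonneg fun j _ => norm_nonneg _
  rw [pi_norm_le_iff_of_nonneg (by positivity)]
  intro i
  calc ‖(M *ᵥ x) i‖ = ‖∑ j, M i j * x j‖ := rfl
    _ ≤ ∑ j, ‖M i j * x j‖ := norm_sum_le _ _
    _ ≤ ∑ j, ‖M i j‖ * ‖x‖ := by
        refine Finset.sum_le_sum fun j _ => ?_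
        rw [norm_mul]
        exact mul_le_mul_of_nonneg_left (norm_le_pi_norm x j) (norm_nonneg _)
    _ = (∑ j, ‖M i j‖) * ‖x‖ := by rw [Finset.sum_mul]
    _ ≤ (∑ i, ∑ j, ‖M i j‖) * ‖x‖ := by
        refine mul_le_mul_of_nonneg_right ?_ (norm_nonneg _)
        exact Finset.single_le_sum (f := fun i => ∑ j, ‖M i j‖)
          (fun i _ => Finset.sum_nonneg fun j _ => norm_nonneg _) (Finset.mem_univ i)

/-- Uniqueness: a solution with zero Cauchy data at `-1` vanishes identically. -/
lemma solves_uniq (hQ : Continuous Q) {u u' : ℝ → Fin n → ℂ}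
    (h : SolvesODE Q z u u') (h0 : u (-1) = 0) (h1 : u' (-1) = 0) (t : ℝ) :
    u t = 0 ∧ u' t = 0 := by
  set a : ℝ := -(|t| + 2) with ha
  set b : ℝ := |t| + 2 with hb
  have hab : a < b := by
    have : (0:ℝ) < |t| + 2 := by positivity
    simp only [ha, hb]; linarith
  -- the clamp of `s` to `[a,b]`
  set cl : ℝ → ℝ := fun s => max a (min b s) with hcl
  have hclmem : ∀ s, cl s ∈ Icc a b := fun s =>
    ⟨le_max_left _ _, max_le hab.le (min_le_left _ _)⟩
  have hclId : ∀ s ∈ Icc a b, cl s = s := fun s hs => by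
    simp only [hcl]
    rw [min_eq_right hs.2, max_eq_right hs.1]
  -- a bound for the coefficients on `[a,b]`
  have hcont : Continuous fun s => ∑ i, ∑ j, ‖Q s i j‖ := by
    refine continuous_finset_sum _ fun i _ => continuous_finset_sum _ fun j _ => ?_
    exact ((continuous_apply j).comp ((continuous_apply i).comp hQ)).norm
  obtain ⟨s₀, _, hs₀⟩ := isCompact_Icc.exists_isMaxOn
    (Set.nonempty_Icc.mpr hab.le) hcont.continuousOn
  set C : ℝ := max (∑ i, ∑ j, ‖Q s₀ i j‖) 0 with hC
  have hC0 : 0 ≤ C := le_max_right _ _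
  have hCb : ∀ s, (∑ i, ∑ j, ‖Q (cl s) i j‖) ≤ C :=
    fun s => le_max_of_le_left (hs₀ (hclmem s))
  set K : NNReal := Real.toNNReal (1 + C + ‖z‖) with hK
  have hKc : (K : ℝ) = 1 + C + ‖z‖ := Real.coe_toNNReal _ (by positivity)
  -- the (clamped) vector field
  set v : ℝ → ((Fin n → ℂ) × (Fin n → ℂ)) → ((Fin n → ℂ) × (Fin n → ℂ)) :=
    fun s p => (p.2, Q (cl s) *ᵥ p.1 - z • p.1) with hv
  have hlip : ∀ s, LipschitzOnWith K (v s) Set.univ := by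
    intro s
    refine LipschitzWith.lipschitzOnWith (LipschitzWith.of_dist_le_mul fun x y => ?_)
    rw [dist_eq_norm, dist_eq_norm]
    have hsub : v s x - v s y =
        (x.2 - y.2, Q (cl s) *ᵥ (x.1 - y.1) - z • (x.1 - y.1)) := by
      simp only [hv, Prod.mk_sub_mk, Matrix.mulVec_sub, smul_sub, Prod.mk.injEq]
      exact ⟨trivial, by abel⟩
    rw [hsub, Prod.norm_def]
    have h1n : ‖x.2 - y.2‖ ≤ ‖x - y‖ := norm_snd_le (x - y)
    have h2n : ‖x.1 - y.1‖ ≤ ‖x - y‖ := norm_fst_le (x - y)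
    refine max_le ?_ ?_
    · calc ‖x.2 - y.2‖ ≤ ‖x - y‖ := h1n
        _ ≤ (K : ℝ) * ‖x - y‖ := by
            rw [hKc]; nlinarith [norm_nonneg (x - y), hC0, norm_nonneg z]
    · calc ‖Q (cl s) *ᵥ (x.1 - y.1) - z • (x.1 - y.1)‖
          ≤ ‖Q (cl s) *ᵥ (x.1 - y.1)‖ + ‖z • (x.1 - y.1)‖ := norm_sub_le _ _
        _ ≤ (∑ i, ∑ j, ‖Q (cl s) i j‖) * ‖x.1 - y.1‖ + ‖z‖ * ‖x.1 - y.1‖ := by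
            rw [norm_smul]; exact add_le_add (mulVec_norm_le _ _) le_rfl
        _ ≤ C * ‖x - y‖ + ‖z‖ * ‖x - y‖ := by
            have hsn : (0:ℝ) ≤ ∑ i, ∑ j, ‖Q (cl s) i j‖ :=
              Finset.sum_nonneg fun i _ => Finset.sum_nonneg fun j _ => norm_nonneg _
            nlinarith [hCb s, h2n, norm_nonneg (x.1 - y.1), norm_nonneg z,
              hC0, norm_nonneg (x - y)]
        _ ≤ (K : ℝ) * ‖x - y‖ := by
            rw [hKc]; nlinarith [norm_nonneg (x - y)]
  -- the two solutions
  set f : ℝ → (Fin n → ℂ) × (Fin n → ℂ) := fun s => (u s, u' s) with hf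
  have hfd : ∀ s, HasDerivAt f ((u' s, Q s *ᵥ u s - z • u s)) s :=
    fun s => (h.1 s).prodMk (h.2 s)
  have hfc : ContinuousOn f (Icc a b) :=
    (continuous_iff_continuousAt.2 fun s => (hfd s).continuousAt).continuousOn
  have hod := ODE_solution_unique_of_mem_Icc (v := v) (s := fun _ => Set.univ)
    (K := K) (fun s _ => hlip s) (t₀ := -1)
    (f := f) (g := fun _ => (0, 0))
    (by refine ⟨?_, ?_⟩ <;> simp only [ha, hb] <;> nlinarith [abs_nonneg t])
    hfc
    (fun s hs => by
      have := hfd s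
      simpa [hv, hf, hclId s (Ioo_subset_Icc_self hs)] using this)
    (fun _ _ => trivial)
    continuousOn_const
    (fun s hs => by
      simpa [hv, Matrix.mulVec_zero, Prod.mk_zero_zero] using hasDerivAt_const s ((0, 0) :
        (Fin n → ℂ) × (Fin n → ℂ)))
    (fun _ _ => trivial)
    (by simp [hf, h0, h1])
  have htm : t ∈ Icc a b := by
    refine ⟨?_, ?_⟩ <;> simp only [ha, hb] <;>
      rcases abs_cases t with ⟨h', _⟩ | ⟨h', _⟩ <;> linarith
  have := hod htm
  simp only [hf, Prod.mk.injEq] at this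
  exact ⟨this.1, this.2⟩

lemma solves_rep (hQ : Continuous Q)
    {Y Y' V V' : ℝ → Matrix (Fin n) (Fin n) ℂ}
    (hY : SolvesMatODE Q z Y Y') (hV : SolvesMatODE Q z V V')
    (hY₀ : Y (-1) = 0) (hY₁ : Y' (-1) = 1)
    (hV₀ : V (-1) = 1) (hV₁ : V' (-1) = 0)
    {u u' : ℝ → Fin n → ℂ} (h : SolvesODE Q z u u') (t : ℝ) :
    u t = V t *ᵥ u (-1) + Y t *ᵥ u' (-1) ∧
    u' t = V' t *ᵥ u (-1) + Y' t *ᵥ u' (-1) := by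
  have hw : SolvesODE Q z (fun t => V t *ᵥ u (-1) + Y t *ᵥ u' (-1))
      (fun t => V' t *ᵥ u (-1) + Y' t *ᵥ u' (-1)) :=
    solves_add (solves_mulVec hV (u (-1))) (solves_mulVec hY (u' (-1)))
  have hd := solves_sub h hw
  have hd0 : (u - fun t => V t *ᵥ u (-1) + Y t *ᵥ u' (-1)) (-1) = 0 := by
    simp [hV₀, hY₀, Matrix.one_mulVec, Matrix.zero_mulVec]
  have hd1 : (u' - fun t => V' t *ᵥ u (-1) + Y' t *ᵥ u' (-1)) (-1) = 0 := by
    simp [hV₁, hY₁, Matrix.one_mulVec, Matrix.zero_mulVec]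
  obtain ⟨e1, e2⟩ := solves_uniq hQ hd hd0 hd1 t
  rw [Pi.sub_apply, sub_eq_zero] at e1 e2
  exact ⟨e1, e2⟩

lemma matrix_ext_mulVec {m : Type*} [Fintype m] [DecidableEq m]
    {A B : Matrix m m ℂ} (h : ∀ v, A *ᵥ v = B *ᵥ v) : A = B := by
  ext i j
  have := congrFun (h (Pi.single j 1)) i
  simpa [Matrix.mulVec_single] using this

end Aux

/-- **Lemma 3.2.** -/
theorem lem_frame_DtN
    (Q : ℝ → Matrix (Fin n) (Fin n) ℂ) (hQ : Continuous Q) (z : ℂ)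
    -- Y₋ and V₋ with their initial conditions at x = -1
    (Y Y' V V' : ℝ → Matrix (Fin n) (Fin n) ℂ)
    (hY : SolvesMatODE Q z Y Y') (hV : SolvesMatODE Q z V V')
    (hY₀ : Y (-1) = 0) (hY₁ : Y' (-1) = 1)
    (hV₀ : V (-1) = 1) (hV₁ : V' (-1) = 0) :
    -- X = [γ_D Y₋, γ_D V₋], Z = [γ_N Y₋, γ_N V₋]
    (z ∈ DirichletResolvent Q ↔
      IsUnit (Matrix.fromBlocks (Y 1) (V 1) (Y (-1)) (V (-1)))) ∧
    (z ∈ DirichletResolvent Q →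
      ∀ M : Matrix (Fin n ⊕ Fin n) (Fin n ⊕ Fin n) ℂ, IsDtN Q z M →
        M = Matrix.fromBlocks (Y' 1) (V' 1) (-(Y' (-1))) (-(V' (-1))) *
          (Matrix.fromBlocks (Y 1) (V 1) (Y (-1)) (V (-1)))⁻¹) := by
  set X := Matrix.fromBlocks (Y 1) (V 1) (Y (-1)) (V (-1)) with hX
  set Z := Matrix.fromBlocks (Y' 1) (V' 1) (-(Y' (-1))) (-(V' (-1))) with hZ
  have hdet : X.det = (Y 1).det := by
    rw [hX, hY₀, hV₀, Matrix.det_fromBlocks_zero₂₁, Matrix.det_one, mul_one]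
  have hiff : IsUnit X ↔ (Y 1).det ≠ 0 := by
    rw [Matrix.isUnit_iff_isUnit_det, hdet, isUnit_iff_ne_zero]
  have main : z ∈ DirichletResolvent Q ↔ IsUnit X := by
    rw [hiff]
    constructor
    · intro hres
      by_contra hdet0
      obtain ⟨c, hc0, hcm⟩ := Matrix.exists_mulVec_eq_zero_iff.mpr hdet0
      have hsol := solves_mulVec hY c
      have htrD : trD (fun t => Y t *ᵥ c) = 0 := by
        funext k
        cases k with
        | inl i => simp [trD, hcm]
        | inr i => simp [trD, hY₀, Matrix.zero_mulVec]
      have hu0 := hres _ _ hsol htrD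
      have h1 := hsol.1
      rw [hu0] at h1
      have hcc : Y' (-1) *ᵥ c = 0 :=
        (h1 (-1)).unique (hasDerivAt_const (-1) (0 : Fin n → ℂ))
      rw [hY₁, Matrix.one_mulVec] at hcc
      exact hc0 hcc
    · intro hdetne u u' hsol htr
      have hinj : Function.Injective (Y 1).mulVec :=
        Matrix.mulVec_injective_iff_isUnit.mpr
          ((Matrix.isUnit_iff_isUnit_det _).mpr (isUnit_iff_ne_zero.mpr hdetne))
      have hm1 : u (-1) = 0 := funext fun i => congrFun htr (Sum.inr i)
      have hp1 : u 1 = 0 := funext fun i => congrFun htr (Sum.inl i)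
      have hb : u' (-1) = 0 := by
        apply hinj
        have := (solves_rep hQ hY hV hY₀ hY₁ hV₀ hV₁ hsol 1).1
        rw [hp1, hm1, Matrix.mulVec_zero, zero_add] at this
        rw [← this, Matrix.mulVec_zero]
      funext t
      have := (solves_rep hQ hY hV hY₀ hY₁ hV₀ hV₁ hsol t).1
      rw [hm1, hb, Matrix.mulVec_zero, Matrix.mulVec_zero, add_zero] at this
      simpa using this
  refine ⟨main, fun hres M hM => ?_⟩
  have hXu : IsUnit X := main.mp hres
  have hdX : IsUnit X.det := (Matrix.isUnit_iff_isUnit_det X).mp hXu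
  have hXinj : Function.Injective X.mulVec :=
    Matrix.mulVec_injective_iff_isUnit.mpr hXu
  have hMX : M * X = Z := by
    apply matrix_ext_mulVec
    intro w
    obtain ⟨u, u', hsol, htrD, hMf⟩ := hM (X *ᵥ w)
    have hrep1 := solves_rep hQ hY hV hY₀ hY₁ hV₀ hV₁ hsol 1
    have hXba : X *ᵥ Sum.elim (u' (-1)) (u (-1)) = trD u := by
      rw [hX, Matrix.fromBlocks_mulVec, Sum.elim_comp_inl, Sum.elim_comp_inr,
        hY₀, hV₀, Matrix.zero_mulVec, Matrix.one_mulVec, zero_add]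
      show _ = Sum.elim (u 1) (u (-1))
      rw [hrep1.1, add_comm]
    have hw : w = Sum.elim (u' (-1)) (u (-1)) := by
      apply hXinj
      show X *ᵥ w = X *ᵥ _
      rw [hXba, htrD]
    calc (M * X) *ᵥ w = M *ᵥ (X *ᵥ w) := (Matrix.mulVec_mulVec _ _ _).symm
      _ = trN u' := hMf
      _ = Z *ᵥ w := by
          rw [hw, hZ, Matrix.fromBlocks_mulVec, Sum.elim_comp_inl, Sum.elim_comp_inr,
            hY₁, hV₁, Matrix.neg_mulVec, Matrix.neg_mulVec, Matrix.zero_mulVec,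
            Matrix.one_mulVec, neg_zero, add_zero]
          show Sum.elim (u' 1) (-(u' (-1))) = _
          rw [hrep1.2, add_comm]
  calc M = M * (X * X⁻¹) := by rw [Matrix.mul_nonsing_inv _ hdX, Matrix.mul_one]
    _ = (M * X) * X⁻¹ := by rw [Matrix.mul_assoc]
    _ = Z * X⁻¹ := by rw [hMX]


end Evans
end
end

section
/- Assume Θ₁ satisfies Hypothesis 4.4 and Θ₂ ∈ B(H^{1/2}(∂Ω), H^{−1/2}(∂Ω)). Then: (i) if λ ∈ ρ(L^{Θ₁}), R_{Θ₁,Θ₂}(λ) = I + (Θ₂ − Θ₁)N_{Θ₁}(λ); (ii) if λ ∈ ρ(L^D) ∩ ρ(L^{Θ₁}), M_{Θ₂}(λ) = R_{Θ₁,Θ₂}(λ)M_{Θ₁}(λ). If moreover Θ₂ also satisfies Hypothesis 4.4 and λ ∈ ρ(L^{Θ₁}) ∩ ρ(L^{Θ₂}), then: (iii) N_{Θ₁}(λ) = N_{Θ₂}(λ)R_{Θ₁,Θ₂}(λ); (iv) N_{Θ₁}(λ) − N_{Θ₂}(λ) = N_{Θ₂}(λ)(Θ₂ − Θ₁)N_{Θ₁}(λ);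 (v) R_{Θ₁,−Θ₂}(λ)R_{Θ₂,Θ₁}(λ) = I − 2Θ₂N_{Θ₂}(λ). -/
/-!
Proposition 4.9 (factorization identities between the Robin-to-Dirichlet,
Dirichlet-to-Robin and Robin-to-Robin maps).  The PDE setting is abstracted:
`H1` is `H¹(Ω)`, `Hb = H^{1/2}(∂Ω)`, `Hb' = H^{-1/2}(∂Ω)`, `sol z` is the set
of weak solutions of `Lu = zu`, and the various boundary maps are characterized
by their defining properties.  Hypothesis 4.4 for a boundary operator (the form
`Φ_Θ` being elliptic) enters only through its consequence, unique solvability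
of the Robin problem off the spectrum, which is how membership in the resolvent
sets is encoded here.
-/

open Complex Topology Filter Set

noncomputable section
namespace Evans

variable {Hb Hb' : Type*} [NormedAddCommGroup Hb] [NormedSpace ℂ Hb]
  [NormedAddCommGroup Hb'] [NormedSpace ℂ Hb']
variable {H1 : Type*} [AddCommGroup H1] [Module ℂ H1]

/-- unique solvability of the Robin problem, i.e. `z ∈ ρ(𝓛^Θ)`. -/
def RobinRegular (sol : ℂ → Set H1) (γD : H1 →ₗ[ℂ] Hb) (γN : H1 →ₗ[ℂ] Hb')
    (Θ : Hb →L[ℂ] Hb') (z : ℂ) : Prop :=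
  ∀ g : Hb', ∃! u, u ∈ sol z ∧ γN u + Θ (γD u) = g

/-- unique solvability of the Dirichlet problem, i.e. `z ∈ ρ(𝓛^D)`. -/
def DirichletRegular (sol : ℂ → Set H1) (γD : H1 →ₗ[ℂ] Hb) (z : ℂ) : Prop :=
  ∀ g : Hb, ∃! u, u ∈ sol z ∧ γD u = g

/-- `N` is the Robin-to-Dirichlet map `N_Θ(z)`. -/
def IsRtD (sol : ℂ → Set H1) (γD : H1 →ₗ[ℂ] Hb) (γN : H1 →ₗ[ℂ] Hb')
    (Θ : Hb →L[ℂ] Hb') (N : Hb' →L[ℂ] Hb) (z : ℂ) : Prop :=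
  ∀ g : Hb', ∃ u, u ∈ sol z ∧ γN u + Θ (γD u) = g ∧ N g = γD u

/-- `M` is the Dirichlet-to-Robin map `M_Θ(z)`. -/
def IsDtR (sol : ℂ → Set H1) (γD : H1 →ₗ[ℂ] Hb) (γN : H1 →ₗ[ℂ] Hb')
    (Θ : Hb →L[ℂ] Hb') (M : Hb →L[ℂ] Hb') (z : ℂ) : Prop :=
  ∀ g : Hb, ∃ u, u ∈ sol z ∧ γD u = g ∧ M g = γN u + Θ (γD u)

/-- `R` is the Robin-to-Robin map `R_{Θ₁,Θ₂}(z)`. -/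
def IsRtR (sol : ℂ → Set H1) (γD : H1 →ₗ[ℂ] Hb) (γN : H1 →ₗ[ℂ] Hb')
    (Θ₁ Θ₂ : Hb →L[ℂ] Hb') (R : Hb' →L[ℂ] Hb') (z : ℂ) : Prop :=
  ∀ g : Hb', ∃ u, u ∈ sol z ∧ γN u + Θ₁ (γD u) = g ∧ R g = γN u + Θ₂ (γD u)

/-- **Proposition 4.9.** -/
theorem prop_RtoR
    (sol : ℂ → Set H1) (γD : H1 →ₗ[ℂ] Hb) (γN : H1 →ₗ[ℂ] Hb')
    (Θ₁ Θ₂ : Hb →L[ℂ] Hb') (z : ℂ)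
    -- λ ∈ ρ(𝓛^{Θ₁}) (Θ₁ satisfies Hypothesis 4.4)
    (h₁ : RobinRegular sol γD γN Θ₁ z)
    (R12 : Hb' →L[ℂ] Hb') (hR12 : IsRtR sol γD γN Θ₁ Θ₂ R12 z)
    (N1 : Hb' →L[ℂ] Hb) (hN1 : IsRtD sol γD γN Θ₁ N1 z)
    (M1 : Hb →L[ℂ] Hb') (M2 : Hb →L[ℂ] Hb')
    (hM1 : DirichletRegular sol γD z → IsDtR sol γD γN Θ₁ M1 z)
    (hM2 : DirichletRegular sol γD z → IsDtR sol γD γN Θ₂ M2 z)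
    (N2 : Hb' →L[ℂ] Hb)
    (hN2 : RobinRegular sol γD γN Θ₂ z → IsRtD sol γD γN Θ₂ N2 z)
    (R21 : Hb' →L[ℂ] Hb')
    (hR21 : RobinRegular sol γD γN Θ₂ z → IsRtR sol γD γN Θ₂ Θ₁ R21 z)
    (R1m2 : Hb' →L[ℂ] Hb')
    (hR1m2 : IsRtR sol γD γN Θ₁ (-Θ₂) R1m2 z) :
    -- (i)
    (R12 = 1 + (Θ₂ - Θ₁).comp N1) ∧
    -- (ii)
    (DirichletRegular sol γD z → M2 = R12.comp M1) ∧
    -- (iii), (iv), (v): if moreover Θ₂ satisfies Hypothesis 4.4 and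
    -- λ ∈ ρ(𝓛^{Θ₁}) ∩ ρ(𝓛^{Θ₂})
    (RobinRegular sol γD γN Θ₂ z →
      N1 = N2.comp R12 ∧
      N1 - N2 = (N2.comp (Θ₂ - Θ₁)).comp N1 ∧
      R1m2.comp R21 = 1 - (2 : ℂ) • (Θ₂.comp N2)) := by
  -- (i)
  have hi : R12 = 1 + (Θ₂ - Θ₁).comp N1 := by
    ext g
    obtain ⟨u, hu, hru, hR⟩ := hR12 g
    obtain ⟨u', hu', hru', hN⟩ := hN1 g
    have huu : u = u' := (h₁ g).unique ⟨hu, hru⟩ ⟨hu', hru'⟩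
    subst huu
    have h2 : (1 + (Θ₂ - Θ₁).comp N1) g = g + (Θ₂ (γD u) - Θ₁ (γD u)) := by simp [hN]
    rw [hR, h2, ← hru]; abel
  refine ⟨hi, ?_, ?_⟩
  · -- (ii)
    intro hD
    ext g
    obtain ⟨u, hu, hgu, hM2⟩ := hM2 hD g
    obtain ⟨w, hw, hgw, hM1⟩ := hM1 hD g
    have huw : u = w := (hD g).unique ⟨hu, hgu⟩ ⟨hw, hgw⟩
    subst huw
    obtain ⟨v, hv, hrv, hR⟩ := hR12 (M1 g)
    have huv : u = v := (h₁ (M1 g)).unique ⟨hu, hM1.symm⟩ ⟨hv, hrv⟩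
    subst huv
    simp [hM2, hR, hgu, hgw]
  · -- (iii), (iv), (v)
    intro h₂
    have hiii : N1 = N2.comp R12 := by
      ext g
      obtain ⟨u, hu, hru, hR⟩ := hR12 g
      obtain ⟨w, hw, hrw, hN⟩ := hN1 g
      have huw : u = w := (h₁ g).unique ⟨hu, hru⟩ ⟨hw, hrw⟩
      subst huw
      obtain ⟨v, hv, hrv, hN2⟩ := hN2 h₂ (R12 g)
      have huv : u = v := (h₂ (R12 g)).unique ⟨hu, hR.symm⟩ ⟨hv, hrv⟩
      subst huv
      simp [hN, hN2]
    refine ⟨hiii, ?_, ?_⟩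
    · -- (iv)
      ext g
      have h1g : N1 g - N2 g = N2 (R12 g) - N2 g := by rw [hiii]; rfl
      rw [ContinuousLinearMap.sub_apply, h1g, hi]
      simp only [ContinuousLinearMap.add_apply, ContinuousLinearMap.one_apply,
        ContinuousLinearMap.coe_comp', Function.comp_apply, ContinuousLinearMap.sub_apply,
        map_add, map_sub]
      abel
    · -- (v)
      ext g
      obtain ⟨u, hu, hru, hR21⟩ := hR21 h₂ g
      obtain ⟨v, hv, hrv, hR1m2⟩ := hR1m2 (R21 g)
      have huv : u = v := (h₁ (R21 g)).unique ⟨hu, hR21.symm⟩ ⟨hv, hrv⟩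
      subst huv
      obtain ⟨w, hw, hrw, hN2⟩ := hN2 h₂ g
      have huw : u = w := (h₂ g).unique ⟨hu, hru⟩ ⟨hw, hrw⟩
      subst huw
      have h2 : (1 - (2 : ℂ) • Θ₂.comp N2) g = g - (2 : ℂ) • Θ₂ (γD u) := by simp [hN2]
      rw [ContinuousLinearMap.comp_apply, hR1m2, h2, ← hru]
      simp only [ContinuousLinearMap.neg_apply, two_smul]
      abel

end Evans
end
end
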